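/- arXiv:1407.3169 — 6 statements merged into one kernel-verified Lean document; each statement's English description precedes it below -/
import Mathlib

section
/- Let X and Y be topological spaces. If Y is totally separated (any two distinct points are separated by a clopen set), then for every x in X, the quasi-component of x equals the set of points y such that f(x) = f(y) for every continuous function f : X → Y. -/
/-- The quasi-component of a point: the intersection of all clopen sets containing it. -/
def quasiComponent {X : Type*} [TopologicalSpace X] (x : X) : Set X :=
  ⋂₀ {U : Set X | IsClopen U ∧ x ∈ U}

theorem stmt0 {X Y : Type*} [TopologicalSpace X] [TopologicalSpace Y]
    [TotallySeparatedSpace Y] [Nontrivial Y] (x : X) :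
    quasiComponent x = {y : X | ∀ f : C(X, Y), f x = f y} := by
  ext y
  simp only [quasiComponent, Set.mem_sInter, Set.mem_setOf_eq]
  constructor
  · intro h f
    by_contra hne
    obtain ⟨U, hU, hfx, hfy⟩ := exists_isClopen_of_totally_separated hne
    exact hfy (h (f ⁻¹' U) ⟨hU.preimage f.continuous, hfx⟩ : y ∈ f ⁻¹' U)
  · intro h U ⟨hU, hxU⟩
    obtain ⟨a, b, hab⟩ := exists_pair_ne Y
    classical
    set f : X → Y := fun z => if z ∈ U then a else b with hf
    have hfc : Continuous f :=
      continuous_const.piecewise (by rw [hU.frontier_eq]; simp) continuous_const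
    have := h ⟨f, hfc⟩
    simp only [ContinuousMap.coe_mk, hf] at this
    rw [if_pos hxU] at this
    by_contra hy
    rw [if_neg hy] at this
    exact hab this
end

section
/- Let Z be a totally separated space and Y have an absorbing element 0, a unit 1 ≠ 0, and continuous characteristic functions for clopen sets. If I is a multiplicative ideal of C(Z,Y) whose common zero set V(I) contains two or more points, then I is not prime. -/
/-- Pointwise multiplication of continuous maps into a topological magma. -/
def pmul {Z Y : Type*} [TopologicalSpace Z] [TopologicalSpace Y] [Mul Y]
    (hc : Continuous fun p : Y × Y => p.1 * p.2) (f g : C(Z, Y)) : C(Z, Y) :=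
  ⟨fun z => f z * g z, hc.comp (f.continuous.prodMk g.continuous)⟩

theorem stmt10 {Z Y : Type*} [TopologicalSpace Z] [TopologicalSpace Y]
    [TotallySeparatedSpace Z] [Mul Y]
    (hc : Continuous fun p : Y × Y => p.1 * p.2)
    (y0 y1 : Y) (habs : ∀ y : Y, y0 * y = y0 ∧ y * y0 = y0) (h10 : y1 ≠ y0)
    (hchar : ∀ U : Set Z, IsClopen U →
      ∃ χ : C(Z, Y), (∀ z ∈ U, χ z = y0) ∧ (∀ z ∉ U, χ z = y1))
    (I : Set C(Z, Y))
    (hITheta : ContinuousMap.const Z y0 ∈ I)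
    (hIideal : ∀ f g : C(Z, Y), g ∈ I → pmul hc f g ∈ I)
    (hV : ∃ z1 z2 : Z, z1 ≠ z2 ∧ (∀ f ∈ I, f z1 = y0) ∧ (∀ f ∈ I, f z2 = y0)) :
    ¬ (I ≠ Set.univ ∧ ∀ f g : C(Z, Y), pmul hc f g ∈ I → f ∈ I ∨ g ∈ I) := by
  rintro ⟨-, hprime⟩
  obtain ⟨z1, z2, hz, hI1, hI2⟩ := hV
  obtain ⟨U, hU, hz1U, hz2U⟩ := exists_isClopen_of_totally_separated hz
  obtain ⟨χ, hχ0, hχ1⟩ := hchar U hU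
  obtain ⟨ψ, hψ0, hψ1⟩ := hchar Uᶜ hU.compl
  have hmem : pmul hc χ ψ ∈ I := by
    have : pmul hc χ ψ = ContinuousMap.const Z y0 := by
      ext z
      by_cases h : z ∈ U
      · show χ z * ψ z = y0
        rw [hχ0 z h]; exact (habs _).1
      · show χ z * ψ z = y0
        rw [hψ0 z h]; exact (habs _).2
    rw [this]; exact hITheta
  rcases hprime _ _ hmem with h | h
  · exact h10 ((hχ1 z2 hz2U) ▸ hI2 _ h)
  · exact h10 ((hψ1 z1 (by simpa using hz1U)) ▸ hI1 _ h)
end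

section
/- Let Z be a totally separated space and Y have an absorbing 0 and unit 1 with no zero divisors, admitting continuous characteristic functions of clopen sets. Then for a nonempty subset U ⊆ Z, the ideal I(U) = {f ∈ C(Z,Y) : f vanishes on U} is prime if and only if U is a singleton. -/
theorem stmt11 {Z Y : Type*} [TopologicalSpace Z] [TopologicalSpace Y]
    [TotallySeparatedSpace Z] [Mul Y]
    (hc : Continuous fun p : Y × Y => p.1 * p.2)
    (y0 y1 : Y) (habs : ∀ y : Y, y0 * y = y0 ∧ y * y0 = y0)
    (hunit : ∀ y : Y, y * y1 = y ∧ y1 * y = y) (h10 : y1 ≠ y0)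
    (hnzd : ∀ a b : Y, a * b = y0 → a = y0 ∨ b = y0)
    (hchar : ∀ U : Set Z, IsClopen U →
      ∃ χ : C(Z, Y), (∀ z ∈ U, χ z = y0) ∧ (∀ z ∉ U, χ z = y1))
    (U : Set Z) (hU : U.Nonempty) :
    (({f : C(Z, Y) | ∀ z ∈ U, f z = y0} : Set C(Z, Y)) ≠ Set.univ ∧
      ∀ f g : C(Z, Y), pmul hc f g ∈ {f : C(Z, Y) | ∀ z ∈ U, f z = y0} →
        f ∈ {f : C(Z, Y) | ∀ z ∈ U, f z = y0} ∨
        g ∈ {f : C(Z, Y) | ∀ z ∈ U, f z = y0}) ↔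
    ∃ z : Z, U = {z} := by
  constructor
  · rintro ⟨-, hprime⟩
    obtain ⟨u, hu⟩ := hU
    refine ⟨u, Set.eq_singleton_iff_unique_mem.2 ⟨hu, fun v hv => ?_⟩⟩
    by_contra hvu
    obtain ⟨V, hV, huV, hvV⟩ := exists_isClopen_of_totally_separated (Ne.symm hvu)
    obtain ⟨f, hf0, hf1⟩ := hchar V hV
    obtain ⟨g, hg0, hg1⟩ := hchar Vᶜ hV.compl
    have hmem : pmul hc f g ∈ {f : C(Z, Y) | ∀ z ∈ U, f z = y0} := by
      intro z _
      show f z * g z = y0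
      by_cases hz : z ∈ V
      · rw [hf0 z hz]; exact (habs _).1
      · rw [hg0 z hz]; exact (habs _).2
    rcases hprime f g hmem with h | h
    · exact h10 (hf1 v hvV ▸ h v hv)
    · have : g u = y1 := hg1 u (by simpa using huV)
      exact h10 (this ▸ h u hu)
  · rintro ⟨z, rfl⟩
    constructor
    · intro h
      have : (⟨fun _ => y1, continuous_const⟩ : C(Z, Y)) ∈
          ({f : C(Z, Y) | ∀ w ∈ ({z} : Set Z), f w = y0} : Set C(Z, Y)) := h ▸ Set.mem_univ _
      exact h10 (this z rfl)
    · intro f g hfg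
      have : f z * g z = y0 := hfg z rfl
      rcases hnzd _ _ this with h | h
      · exact Or.inl (fun w hw => by rw [Set.mem_singleton_iff] at hw; rw [hw, h])
      · exact Or.inr (fun w hw => by rw [Set.mem_singleton_iff] at hw; rw [hw, h])
end

section
/- Let Z be totally separated, Y have operations with 0 and 1 satisfying χ_U + χ_{U^c} = Id for clopen U. If I₁ ⊆ I₂ are ideals of C(Z,Y) with I₁ prime and I₂ ≠ C(Z,Y), then for every clopen U: χ_U ∈ I₁ if and only if χ_U ∈ I₂. -/
/-- Pointwise addition of continuous maps. -/
def padd {Z Y : Type*} [TopologicalSpace Z] [TopologicalSpace Y] [Add Y]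
    (hca : Continuous fun p : Y × Y => p.1 + p.2) (f g : C(Z, Y)) : C(Z, Y) :=
  ⟨fun z => f z + g z, hca.comp (f.continuous.prodMk g.continuous)⟩

theorem stmt13 {Z Y : Type*} [TopologicalSpace Z] [TopologicalSpace Y]
    [TotallySeparatedSpace Z] [Mul Y] [Add Y]
    (hc : Continuous fun p : Y × Y => p.1 * p.2)
    (hca : Continuous fun p : Y × Y => p.1 + p.2)
    (y0 y1 : Y) (habs : ∀ y : Y, y0 * y = y0 ∧ y * y0 = y0)
    (hunit : ∀ y : Y, y * y1 = y) (hadd : y0 + y1 = y1 ∧ y1 + y0 = y1)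
    (I1 I2 : Set C(Z, Y)) (hsub : I1 ⊆ I2)
    (hI1Theta : ContinuousMap.const Z y0 ∈ I1)
    (hI1ideal : ∀ f g : C(Z, Y), g ∈ I1 → pmul hc f g ∈ I1)
    (hI1prime : ∀ f g : C(Z, Y), pmul hc f g ∈ I1 → f ∈ I1 ∨ g ∈ I1)
    (hI2ideal : ∀ f g : C(Z, Y), g ∈ I2 → pmul hc f g ∈ I2)
    (hI2add : ∀ f g : C(Z, Y), f ∈ I2 → g ∈ I2 → padd hca f g ∈ I2)
    (hI2ne : I2 ≠ Set.univ)
    (U : Set Z) (hU : IsClopen U)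
    (χU χUc : C(Z, Y))
    (hχU : (∀ z ∈ U, χU z = y0) ∧ (∀ z ∉ U, χU z = y1))
    (hχUc : (∀ z ∈ Uᶜ, χUc z = y0) ∧ (∀ z ∉ Uᶜ, χUc z = y1)) :
    χU ∈ I1 ↔ χU ∈ I2 := by
  constructor
  · exact fun h => hsub h
  · intro h2
    have hprod : pmul hc χU χUc = ContinuousMap.const Z y0 := by
      ext z
      by_cases hz : z ∈ U
      · simp [pmul, hχU.1 z hz, (habs _).1]
      · simp [pmul, hχUc.1 z hz, (habs _).2]
    have := hI1prime χU χUc (hprod ▸ hI1Theta)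
    rcases this with h1 | h1
    · exact h1
    · exfalso
      have hsum : padd hca χU χUc = ContinuousMap.const Z y1 := by
        ext z
        by_cases hz : z ∈ U
        · simp [padd, hχU.1 z hz, hχUc.2 z (by simpa using hz), hadd.1]
        · simp [padd, hχU.2 z hz, hχUc.1 z hz, hadd.2]
      have hone : ContinuousMap.const Z y1 ∈ I2 := hsum ▸ hI2add χU χUc h2 (hsub h1)
      apply hI2ne
      ext f
      simp only [Set.mem_univ, iff_true]
      have : pmul hc f (ContinuousMap.const Z y1) = f := by
        ext z; simp [pmul, hunit]
      exact this ▸ hI2ideal f _ hone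
end

section
/- Let Z be totally separated, {z} clopen in Z, and Y have absorbing 0 and unit 1. If J is a prime multiplicative ideal of C(Z,Y) with J ⊆ I(z), then J = I(z). Hence when {z} is open, I(z) is a minimal prime ideal. -/
theorem stmt17 {Z Y : Type*} [TopologicalSpace Z] [TopologicalSpace Y]
    [TotallySeparatedSpace Z] [Mul Y]
    (hc : Continuous fun p : Y × Y => p.1 * p.2)
    (y0 y1 : Y) (habs : ∀ y : Y, y0 * y = y0 ∧ y * y0 = y0)
    (hunit : ∀ y : Y, y * y1 = y) (h10 : y1 ≠ y0)
    (hchar : ∀ U : Set Z, IsClopen U →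
      ∃ χ : C(Z, Y), (∀ w ∈ U, χ w = y0) ∧ (∀ w ∉ U, χ w = y1))
    (z : Z) (hz : IsClopen ({z} : Set Z))
    (J : Set C(Z, Y))
    (hJTheta : ContinuousMap.const Z y0 ∈ J)
    (hJideal : ∀ f g : C(Z, Y), g ∈ J → pmul hc f g ∈ J)
    (hJprime : ∀ f g : C(Z, Y), pmul hc f g ∈ J → f ∈ J ∨ g ∈ J)
    (hsub : J ⊆ {f : C(Z, Y) | f z = y0}) :
    J = {f : C(Z, Y) | f z = y0} := by
  apply Set.Subset.antisymm hsub
  obtain ⟨χ, hχ0, hχ1⟩ := hchar {z} hz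
  obtain ⟨χ', hχ'0, hχ'1⟩ := hchar {z}ᶜ hz.compl
  have hχJ : χ ∈ J := by
    have hprod : pmul hc χ χ' ∈ J := by
      have : pmul hc χ χ' = ContinuousMap.const Z y0 := by
        ext w
        by_cases hw : w = z
        · subst hw
          simp only [pmul, ContinuousMap.coe_mk, ContinuousMap.const_apply]
          rw [hχ0 w rfl, (habs (χ' w)).1]
        · simp only [pmul, ContinuousMap.coe_mk, ContinuousMap.const_apply]
          rw [hχ'0 w hw, (habs (χ w)).2]
      rw [this]; exact hJTheta
    rcases hJprime _ _ hprod with h | h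
    · exact h
    · exact absurd (hsub h) (by simpa using (hχ'1 z (by simp)).symm ▸ h10)
  intro f hf
  have : pmul hc f χ = f := by
    ext w
    by_cases hw : w = z
    · subst hw
      simp only [pmul, ContinuousMap.coe_mk]
      rw [hχ0 w rfl, (habs (f w)).2, hf]
    · simp only [pmul, ContinuousMap.coe_mk]
      rw [hχ1 w hw, hunit]
  rw [← this]
  exact hJideal f χ hχJ
end

section
/- Let Z be totally separated, Y have absorbing 0 and unit 1 with {0} open in Y (so Y is discrete). If J is a prime multiplicative ideal of C(Z,Y) with J ⊆ I(z) for some z ∈ Z, then J = I(z). -/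
theorem stmt18 {Z Y : Type*} [TopologicalSpace Z] [TopologicalSpace Y]
    [TotallySeparatedSpace Z] [TotallySeparatedSpace Y] [Mul Y]
    (hc : Continuous fun p : Y × Y => p.1 * p.2)
    (y0 y1 : Y) (habs : ∀ y : Y, y0 * y = y0 ∧ y * y0 = y0)
    (hunit : ∀ y : Y, y * y1 = y) (h10 : y1 ≠ y0)
    (h0open : IsOpen ({y0} : Set Y))
    (hchar : ∀ U : Set Z, IsClopen U →
      ∃ χ : C(Z, Y), (∀ w ∈ U, χ w = y0) ∧ (∀ w ∉ U, χ w = y1))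
    (z : Z) (J : Set C(Z, Y))
    (hJTheta : ContinuousMap.const Z y0 ∈ J)
    (hJideal : ∀ f g : C(Z, Y), g ∈ J → pmul hc f g ∈ J)
    (hJprime : ∀ f g : C(Z, Y), pmul hc f g ∈ J → f ∈ J ∨ g ∈ J)
    (hsub : J ⊆ {f : C(Z, Y) | f z = y0}) :
    J = {f : C(Z, Y) | f z = y0} := by
  apply Set.Subset.antisymm hsub
  intro f hf
  simp only [Set.mem_setOf_eq] at hf
  -- U = f ⁻¹' {y0} is clopen
  have hU : IsClopen (f ⁻¹' {y0}) := by
    constructor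
    · exact (isClosed_singleton).preimage f.continuous
    · exact h0open.preimage f.continuous
  obtain ⟨χ, hχ0, hχ1⟩ := hchar _ hU
  obtain ⟨χ', hχ'0, hχ'1⟩ := hchar _ hU.compl
  -- pmul χ χ' = const y0
  have hprod : pmul hc χ χ' = ContinuousMap.const Z y0 := by
    ext w
    by_cases hw : w ∈ f ⁻¹' {y0}
    · show χ w * χ' w = y0
      rw [hχ0 w hw]; exact (habs _).1
    · show χ w * χ' w = y0
      rw [hχ'0 w hw]; exact (habs _).2
  have hχJ : χ ∈ J := by
    rcases hJprime χ χ' (hprod ▸ hJTheta) with h | h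
    · exact h
    · exact absurd (hsub h) (by
        have : χ' z = y1 := hχ'1 z (by simp [Set.mem_preimage, hf])
        simp [Set.mem_setOf_eq, this, h10])
  have hfχ : pmul hc f χ = f := by
    ext w
    by_cases hw : w ∈ f ⁻¹' {y0}
    · show f w * χ w = f w
      rw [hχ0 w hw, (habs _).2]
      exact hw.symm
    · show f w * χ w = f w
      rw [hχ1 w hw, hunit]
  exact hfχ ▸ hJideal f χ hχJ
end
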